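/- Let σ > 0, N = 2/(γ−1) with γ > 1, h_min > 0, and let h : T^d → R satisfy h + σ ≥ h_min and ‖h‖_{L^∞} < ∞. Define the quantity J = (1/(2N)) ∫_{T^d} ((h+σ)² − σ²) ((h+σ)^N − σ^N) dx. Then there exists c₁ = c₁(γ, ‖h‖_{L^∞}, h_min) > 0 such that J ≥ c₁ ∫_{T^d} |(h+σ)^N − σ^N|² dx. -/

import Mathlib

open MeasureTheory

/-- The fundamental domain `[0,1]^d` of the torus `𝕋^d`. -/
noncomputable def torusBox (d : ℕ) : Set (EuclideanSpace ℝ (Fin d)) :=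
  WithLp.ofLp ⁻¹' (Set.univ.pi fun _ => Set.Icc (0:ℝ) 1)

/-- Lipschitz-type bound for `x ↦ x^N` on `[m, B]`, `m > 0`, via the mean value theorem. -/
lemma rpow_sub_le_aux (m B N : ℝ) (hm : 0 < m) (hN : 0 < N) {x y : ℝ}
    (hx : m ≤ x) (hxy : x ≤ y) (hy : y ≤ B) :
    y ^ N - x ^ N ≤ N * max (B ^ (N - 1)) (m ^ (N - 1)) * (y - x) := by
  rcases eq_or_lt_of_le hxy with rfl | hlt
  · simp
  · obtain ⟨c, hc, hderiv⟩ := exists_hasDerivAt_eq_slope (fun t => t ^ N)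
      (fun t => N * t ^ (N - 1)) hlt
      (ContinuousOn.rpow_const continuousOn_id (fun t ht =>
        Or.inl (by rintro rfl; exact absurd ht.1 (by simp; nlinarith))))
      (fun t ht => Real.hasDerivAt_rpow_const
        (Or.inl (by rintro rfl; exact absurd ht.1 (by simp; nlinarith))))
    have hcx : m < c := lt_of_le_of_lt hx hc.1
    have hcB : c < B := lt_of_lt_of_le hc.2 hy
    have hcpos : 0 < c := lt_trans hm hcx
    have hbound : c ^ (N - 1) ≤ max (B ^ (N - 1)) (m ^ (N - 1)) := by
      rcases le_or_gt 1 N with h1 | h1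
      · exact le_max_of_le_left (Real.rpow_le_rpow hcpos.le hcB.le (by linarith))
      · exact le_max_of_le_right (Real.rpow_le_rpow_of_nonpos hm hcx.le (by linarith))
    have hslope : N * c ^ (N - 1) = (y ^ N - x ^ N) / (y - x) := hderiv
    have hyx : (0:ℝ) < y - x := by linarith
    have heq : y ^ N - x ^ N = N * c ^ (N - 1) * (y - x) := by
      field_simp at hslope; linarith [hslope]
    rw [heq]
    have : N * c ^ (N - 1) ≤ N * max (B ^ (N - 1)) (m ^ (N - 1)) :=
      mul_le_mul_of_nonneg_left hbound hN.le
    nlinarith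

/-- Two-sided version. -/
lemma rpow_sub_abs_le (m B N : ℝ) (hm : 0 < m) (hN : 0 < N) {a b : ℝ}
    (ha : a ∈ Set.Icc m B) (hb : b ∈ Set.Icc m B) :
    |a ^ N - b ^ N| ≤ N * max (B ^ (N - 1)) (m ^ (N - 1)) * |a - b| := by
  rcases le_total a b with h | h
  · rw [abs_sub_comm, abs_sub_comm a b,
      abs_of_nonneg (sub_nonneg.2 (Real.rpow_le_rpow (hm.le.trans ha.1) h hN.le)),
      abs_of_nonneg (sub_nonneg.2 h)]
    exact rpow_sub_le_aux m B N hm hN ha.1 h hb.2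
  · rw [abs_of_nonneg (sub_nonneg.2 (Real.rpow_le_rpow (hm.le.trans hb.1) h hN.le)),
      abs_of_nonneg (sub_nonneg.2 h)]
    exact rpow_sub_le_aux m B N hm hN hb.1 h ha.2

/-- Pointwise coercivity estimate. -/
lemma pointwise_coercive (σ N hmin M : ℝ) (hσ : 0 < σ) (hN : 0 < N)
    (hmin_pos : 0 < hmin) (hM : 0 ≤ M)
    {a : ℝ} (ha1 : hmin ≤ a) (ha2 : a ≤ M + σ) :
    let m := min hmin σ
    let B := M + σ
    let L := N * max (B ^ (N - 1)) (m ^ (N - 1))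
    (σ / L) * (a ^ N - σ ^ N) ^ 2 ≤ (a ^ 2 - σ ^ 2) * (a ^ N - σ ^ N) := by
  intro m B L
  have hm : 0 < m := lt_min hmin_pos hσ
  have hB : σ ≤ B := by simp only [B]; linarith
  have hL : 0 < L := by
    have : (0:ℝ) < B ^ (N - 1) := Real.rpow_pos_of_pos (by positivity) _
    exact mul_pos hN (lt_of_lt_of_le this (le_max_left _ _))
  have haI : a ∈ Set.Icc m B := ⟨(min_le_left _ _).trans ha1, ha2⟩
  have hσI : σ ∈ Set.Icc m B := ⟨min_le_right _ _, hB⟩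
  set v := a ^ N - σ ^ N with hv
  set u := a - σ with hu
  have habs : |v| ≤ L * |u| := rpow_sub_abs_le m B N hm hN haI hσI
  have hsign : 0 ≤ u * v := by
    rcases le_total σ a with h | h
    · exact mul_nonneg (by simp [hu]; linarith)
        (by simp [hv]; exact Real.rpow_le_rpow hσ.le h hN.le)
    · have h1 : u ≤ 0 := by simp [hu]; linarith
      have h2 : v ≤ 0 := by
        simp only [hv, sub_nonpos]
        exact Real.rpow_le_rpow (hm.le.trans haI.1) h hN.le
      nlinarith [mul_nonneg (neg_nonneg.2 h1) (neg_nonneg.2 h2)]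
  have hv2 : v ^ 2 ≤ L * (u * v) := by
    have : |v| * |v| ≤ (L * |u|) * |v| := mul_le_mul_of_nonneg_right habs (abs_nonneg _)
    calc v ^ 2 = |v| * |v| := by rw [abs_mul_abs_self, sq]
    _ ≤ L * (|u| * |v|) := by linarith
    _ = L * |u * v| := by rw [abs_mul]
    _ = L * (u * v) := by rw [abs_of_nonneg hsign]
  have hfac : a ^ 2 - σ ^ 2 = (a + σ) * u := by simp [hu]; ring
  have hstep : σ * (u * v) ≤ (a ^ 2 - σ ^ 2) * v := by
    rw [hfac]
    have haσ : σ ≤ a + σ := by linarith [hmin_pos.le.trans ha1]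
    nlinarith
  calc (σ / L) * v ^ 2 ≤ (σ / L) * (L * (u * v)) :=
        mul_le_mul_of_nonneg_left hv2 (by positivity)
    _ = σ * (u * v) := by field_simp
    _ ≤ (a ^ 2 - σ ^ 2) * v := hstep

/-- Let `σ > 0`, `N = 2/(γ−1)` with `γ > 1`, `h_min > 0`.  There exists
`c₁ = c₁(γ, ‖h‖_{L^∞}, h_min) > 0` such that for every measurable `h` with
`h + σ ≥ h_min` and `|h| ≤ M`, the quantity
`J = (1/(2N)) ∫ ((h+σ)² − σ²)((h+σ)^N − σ^N) dx` satisfies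
`J ≥ c₁ ∫ |(h+σ)^N − σ^N|² dx`. -/
theorem coercivity_pressure_term (d : ℕ) (σ γ N hmin M : ℝ)
    (hσ : 0 < σ) (hγ : 1 < γ) (hN : N = 2 / (γ - 1)) (hmin_pos : 0 < hmin)
    (hM : 0 ≤ M) :
    ∃ c₁ : ℝ, 0 < c₁ ∧
      ∀ h : EuclideanSpace ℝ (Fin d) → ℝ, Measurable h →
        (∀ x, hmin ≤ h x + σ) → (∀ x, |h x| ≤ M) →
        c₁ * ∫ x in torusBox d, ((h x + σ) ^ N - σ ^ N) ^ 2
          ≤ (1 / (2 * N)) *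
              ∫ x in torusBox d, ((h x + σ) ^ 2 - σ ^ 2) * ((h x + σ) ^ N - σ ^ N) := by
  have hNpos : 0 < N := by rw [hN]; exact div_pos two_pos (by linarith)
  set m := min hmin σ with hm_def
  set B := M + σ with hB_def
  set L := N * max (B ^ (N - 1)) (m ^ (N - 1)) with hL_def
  have hm : 0 < m := lt_min hmin_pos hσ
  have hL : 0 < L := by
    have : (0:ℝ) < B ^ (N - 1) := Real.rpow_pos_of_pos (by positivity) _
    exact mul_pos hNpos (lt_of_lt_of_le this (le_max_left _ _))
  refine ⟨σ / L / (2 * N), div_pos (div_pos hσ hL) (by linarith), ?_⟩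
  intro h hmeas hlow habs
  -- measure of the box is finite
  have hcompact : IsCompact (torusBox d) := (PiLp.homeomorph 2 (fun _ : Fin d => ℝ)).isCompact_preimage.2
    (isCompact_univ_pi fun _ => isCompact_Icc)
  have hfin : volume (torusBox d) < ⊤ := hcompact.measure_lt_top
  set μ := volume.restrict (torusBox d) with hμ
  have hμfin : IsFiniteMeasure μ := ⟨by rw [hμ, Measure.restrict_apply_univ]; exact hfin⟩
  -- bounds on a := h x + σ
  have haB : ∀ x, h x + σ ≤ B := fun x => by
    have := (abs_le.1 (habs x)).2; simp [hB_def]; linarith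
  -- measurability
  have hmeasa : Measurable fun x => h x + σ := hmeas.add_const σ
  have hmeasp : Measurable fun x => (h x + σ) ^ N :=
    (Real.continuous_rpow_const hNpos.le).measurable.comp hmeasa
  have hG : Measurable fun x => ((h x + σ) ^ N - σ ^ N) ^ 2 :=
    (hmeasp.sub measurable_const).pow_const 2
  have hF : Measurable fun x => ((h x + σ) ^ 2 - σ ^ 2) * ((h x + σ) ^ N - σ ^ N) :=
    ((hmeasa.pow_const 2).sub measurable_const).mul (hmeasp.sub measurable_const)
  -- pointwise bounds for integrability
  have hpowB : ∀ x, |(h x + σ) ^ N - σ ^ N| ≤ B ^ N + σ ^ N := fun x => by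
    have h1 : (0:ℝ) ≤ (h x + σ) ^ N := Real.rpow_nonneg (by linarith [hlow x, hmin_pos]) _
    have h2 : (h x + σ) ^ N ≤ B ^ N :=
      Real.rpow_le_rpow (by linarith [hlow x, hmin_pos]) (haB x) hNpos.le
    have h3 : (0:ℝ) ≤ σ ^ N := Real.rpow_nonneg hσ.le _
    rw [abs_le]; constructor <;> linarith
  have hintG : Integrable (fun x => ((h x + σ) ^ N - σ ^ N) ^ 2) μ := by
    refine Integrable.mono' (integrable_const ((B ^ N + σ ^ N) ^ 2)) hG.aestronglyMeasurable
      (Filter.Eventually.of_forall fun x => ?_)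
    have := hpowB x
    have h0 : (0:ℝ) ≤ B ^ N + σ ^ N := (abs_nonneg _).trans this
    rw [Real.norm_eq_abs, abs_of_nonneg (sq_nonneg _)]
    calc ((h x + σ) ^ N - σ ^ N) ^ 2 = |(h x + σ) ^ N - σ ^ N| ^ 2 := by rw [sq_abs]
    _ ≤ (B ^ N + σ ^ N) ^ 2 := by nlinarith [abs_nonneg ((h x + σ) ^ N - σ ^ N)]
  have hintF : Integrable (fun x => ((h x + σ) ^ 2 - σ ^ 2) * ((h x + σ) ^ N - σ ^ N)) μ := by
    refine Integrable.mono' (integrable_const ((B ^ 2 + σ ^ 2) * (B ^ N + σ ^ N)))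
      hF.aestronglyMeasurable (Filter.Eventually.of_forall fun x => ?_)
    have h1 := hpowB x
    have h2 : |(h x + σ) ^ 2 - σ ^ 2| ≤ B ^ 2 + σ ^ 2 := by
      have ha0 : (0:ℝ) ≤ h x + σ := by linarith [hlow x, hmin_pos]
      have : (h x + σ) ^ 2 ≤ B ^ 2 := by nlinarith [haB x]
      rw [abs_le]; constructor <;> nlinarith [sq_nonneg (h x + σ), sq_nonneg σ]
    rw [Real.norm_eq_abs, abs_mul]
    exact mul_le_mul h2 h1 (abs_nonneg _) (by nlinarith [sq_nonneg B, sq_nonneg σ])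
  -- pointwise inequality
  have hpt : ∀ x, (σ / L / (2 * N)) * ((h x + σ) ^ N - σ ^ N) ^ 2
      ≤ (1 / (2 * N)) * (((h x + σ) ^ 2 - σ ^ 2) * ((h x + σ) ^ N - σ ^ N)) := by
    intro x
    have key := pointwise_coercive σ N hmin M hσ hNpos hmin_pos hM (hlow x) (haB x)
    simp only [← hm_def, ← hB_def, ← hL_def] at key
    have h2N : (0:ℝ) < 2 * N := by linarith
    have heq : (σ / L / (2 * N)) * ((h x + σ) ^ N - σ ^ N) ^ 2
        = (1 / (2 * N)) * ((σ / L) * ((h x + σ) ^ N - σ ^ N) ^ 2) := by ring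
    rw [heq]
    exact mul_le_mul_of_nonneg_left key (by positivity)
  calc (σ / L / (2 * N)) * ∫ x in torusBox d, ((h x + σ) ^ N - σ ^ N) ^ 2
      = ∫ x in torusBox d, (σ / L / (2 * N)) * ((h x + σ) ^ N - σ ^ N) ^ 2 := by
        rw [integral_const_mul]
  _ ≤ ∫ x in torusBox d, (1 / (2 * N)) * (((h x + σ) ^ 2 - σ ^ 2) * ((h x + σ) ^ N - σ ^ N)) :=
        integral_mono (hintG.const_mul _) (hintF.const_mul _) fun x => hpt x
  _ = (1 / (2 * N)) * ∫ x in torusBox d, ((h x + σ) ^ 2 - σ ^ 2) * ((h x + σ) ^ N - σ ^ N) := by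
        rw [integral_const_mul]
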